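/- (Planning loss bound.) Let M and M̂ be two finite MDPs sharing the same state space S and action space A. Let γ, γ_Bw be discount factors with 0 ≤ γ ≤ γ_Bw < 1. Let π*_{Bw} be an optimal policy for M at discount γ_Bw, π*_γ an optimal policy for M at discount γ, and π̂ an optimal policy for M̂ at discount γ. Let ε̂ = ||V_{M,γ}^{π*_γ} − V_{M,γ}^{π̂}||_∞, let δ = δ_M(π*_γ, π*_{Bw}) and δ̂ = δ_M(π*_γ, π̂) be discordant action variations computed with the transitions of M, and let κ = κ_γ be the value-function variation of M at discount γ. Then the planning loss satisfies ||V_{M,γ_Bw}^{π*_{Bw}} − V_{M,γ_Bw}^{π̂}||_∞ ≤ κ · ((γ_Bw − γ)/(1 − γ_Bw)) · ( (δ/2)/(1 − γ_Bw(1 − δ/2)) + (δ̂/2)/(1 − γ_Bw(1 − δ̂/2)) ) + ε̂ · (1 − γ)/(1 − γ_Bw). -/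

import Mathlib

open Finset

noncomputable section

/-- Transition matrix of a policy `π` in an MDP with transition function `P`. -/
def polMatrix {S A : Type*} [Fintype S] [DecidableEq S] (P : S → A → S → ℝ) (π : S → A) :
    Matrix S S ℝ :=
  fun s s' => P s (π s) s'

/-- Reward vector of a policy `π` for a reward function `R`. -/
def polReward {S A : Type*} (R : S → A → ℝ) (π : S → A) : S → ℝ :=
  fun s => R s (π s)

/-- Value vector of a policy: `V_γ^π = Σ_{k=0}^∞ γ^k P_π^k R_π`. -/
def valueVec {S A : Type*} [Fintype S] [DecidableEq S] (P : S → A → S → ℝ) (R : S → A → ℝ)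
    (γ : ℝ) (π : S → A) : S → ℝ :=
  ∑' k : ℕ, γ ^ k • ((polMatrix P π ^ k).mulVec (polReward R π))

/-- A policy `π⋆` is optimal for discount `γ` if it dominates every policy in every state. -/
def IsOptimalPolicy {S A : Type*} [Fintype S] [DecidableEq S] (P : S → A → S → ℝ)
    (R : S → A → ℝ) (γ : ℝ) (πstar : S → A) : Prop :=
  ∀ (π : S → A) (s : S), valueVec P R γ π s ≤ valueVec P R γ πstar s

/-- Discordant action variation of two policies:
`max_{s : π s ≠ π' s} ‖P(·|s, π s) − P(·|s, π' s)‖₁`, taken to be `0` when `π = π'`. -/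
def discordantVar {S A : Type*} [Fintype S] [DecidableEq S] [DecidableEq A]
    (P : S → A → S → ℝ) (π π' : S → A) : ℝ :=
  Finset.fold max 0 (fun s => ∑ s', |P s (π s) s' - P s (π' s) s'|)
    (Finset.univ.filter fun s => π s ≠ π' s)

/-- Value-function variation of a policy: `max_{s,s'} |V(s) − V(s')|`. -/
def valueVariation {S : Type*} [Fintype S] [Nonempty S] (V : S → ℝ) : ℝ :=
  (Finset.univ : Finset (S × S)).sup' Finset.univ_nonempty (fun pr => |V pr.1 - V pr.2|)

/-- Sup norm of a vector on a nonempty finite set. -/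
def supNorm {S : Type*} [Fintype S] [Nonempty S] (x : S → ℝ) : ℝ :=
  Finset.univ.sup' Finset.univ_nonempty (fun s => |x s|)


set_option linter.unusedSectionVars false
set_option maxHeartbeats 1000000

section planningHelpers
variable {S : Type*} [Fintype S] [DecidableEq S] [Nonempty S]

variable {S : Type*} [Fintype S] [DecidableEq S] [Nonempty S]

def supN (x : S → ℝ) : ℝ := Finset.univ.sup' Finset.univ_nonempty (fun s => |x s|)

lemma abs_le_supN (v : S → ℝ) (s : S) : |v s| ≤ supN v :=
  Finset.le_sup' (fun s => |v s|) (Finset.mem_univ s)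

lemma supN_nonneg (v : S → ℝ) : 0 ≤ supN v :=
  le_trans (abs_nonneg _) (abs_le_supN v (Classical.arbitrary S))

def RowStoch (M : Matrix S S ℝ) : Prop := (∀ s x, 0 ≤ M s x) ∧ (∀ s, ∑ x, M s x = 1)

lemma RowStoch.pow {M : Matrix S S ℝ} (h : RowStoch M) (k : ℕ) : RowStoch (M ^ k) := by
  induction k with
  | zero =>
    constructor
    · intro s x; by_cases hsx : s = x <;> simp [Matrix.one_apply, hsx]
    · intro s; simp [Matrix.one_apply]
  | succ n ih =>
    constructor
    · intro s x
      rw [pow_succ']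
      exact Finset.sum_nonneg fun y _ => mul_nonneg (h.1 s y) (ih.1 y x)
    · intro s
      rw [pow_succ']
      have : ∀ x, (M * M ^ n) s x = ∑ y, M s y * (M ^ n) y x := fun x => rfl
      simp_rw [this]
      rw [Finset.sum_comm]
      simp_rw [← Finset.mul_sum, ih.2]
      simpa using h.2 s

lemma RowStoch.mulVec_mem {M : Matrix S S ℝ} (h : RowStoch M) {v : S → ℝ} {lo hi : ℝ}
    (hv : ∀ x, lo ≤ v x ∧ v x ≤ hi) (s : S) :
    lo ≤ M.mulVec v s ∧ M.mulVec v s ≤ hi := by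
  have e : M.mulVec v s = ∑ x, M s x * v x := rfl
  constructor
  · calc lo = ∑ x, M s x * lo := by rw [← Finset.sum_mul, h.2 s, one_mul]
      _ ≤ _ := by rw [e]; exact Finset.sum_le_sum fun x _ => mul_le_mul_of_nonneg_left (hv x).1 (h.1 s x)
  · have h1 : M.mulVec v s ≤ ∑ x, M s x * hi := by
      rw [e]; exact Finset.sum_le_sum fun x _ => mul_le_mul_of_nonneg_left (hv x).2 (h.1 s x)
    have h2 : ∑ x, M s x * hi = hi := by rw [← Finset.sum_mul, h.2 s, one_mul]
    linarith

lemma RowStoch.abs_mulVec_le {M : Matrix S S ℝ} (h : RowStoch M) {v : S → ℝ} {c : ℝ}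
    (hv : ∀ x, |v x| ≤ c) (s : S) : |M.mulVec v s| ≤ c :=
  abs_le.2 (h.mulVec_mem (v := v) (lo := -c) (hi := c) (fun x => abs_le.1 (hv x)) s)

def seriesG (M : Matrix S S ℝ) (r : ℝ) (v : S → ℝ) : S → ℝ :=
  ∑' k : ℕ, r ^ k • ((M ^ k).mulVec v)

variable {M : Matrix S S ℝ} {r : ℝ} {v : S → ℝ}

lemma term_abs_le (hM : RowStoch M) (hr0 : 0 ≤ r) (v : S → ℝ) (k : ℕ) (s : S) :
    |r ^ k * ((M ^ k).mulVec v) s| ≤ r ^ k * supN v := by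
  rw [abs_mul, abs_of_nonneg (pow_nonneg hr0 k)]
  exact mul_le_mul_of_nonneg_left ((hM.pow k).abs_mulVec_le (abs_le_supN v) s) (pow_nonneg hr0 k)

lemma summable_pt (hM : RowStoch M) (hr0 : 0 ≤ r) (hr1 : r < 1) (v : S → ℝ) (s : S) :
    Summable (fun k : ℕ => r ^ k * ((M ^ k).mulVec v) s) := by
  apply Summable.of_norm_bounded (g := fun k => r ^ k * supN v)
  · exact (summable_geometric_of_lt_one hr0 hr1).mul_right _
  · intro k
    rw [Real.norm_eq_abs]
    exact term_abs_le hM hr0 v k s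

lemma summable_Pi (hM : RowStoch M) (hr0 : 0 ≤ r) (hr1 : r < 1) (v : S → ℝ) :
    Summable (fun k : ℕ => r ^ k • ((M ^ k).mulVec v)) := by
  apply Summable.of_norm_bounded (g := fun k => r ^ k * supN v)
  · exact (summable_geometric_of_lt_one hr0 hr1).mul_right _
  · intro k
    have h1 : 0 ≤ r ^ k * supN v := mul_nonneg (pow_nonneg hr0 k) (supN_nonneg v)
    refine (pi_norm_le_iff_of_nonneg h1).2 fun s => ?_
    rw [Real.norm_eq_abs]
    have e : (r ^ k • (M ^ k).mulVec v) s = r ^ k * ((M ^ k).mulVec v) s := rfl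
    rw [e]
    exact term_abs_le hM hr0 v k s

lemma seriesG_apply (hM : RowStoch M) (hr0 : 0 ≤ r) (hr1 : r < 1) (v : S → ℝ) (s : S) :
    seriesG M r v s = ∑' k : ℕ, r ^ k * ((M ^ k).mulVec v) s := by
  rw [seriesG, tsum_apply (summable_Pi hM hr0 hr1 v)]
  rfl

lemma seriesG_abs_le (hM : RowStoch M) (hr0 : 0 ≤ r) (hr1 : r < 1) {c : ℝ}
    (hv : ∀ x, |v x| ≤ c) (s : S) : |seriesG M r v s| ≤ c / (1 - r) := by
  rw [seriesG_apply hM hr0 hr1 v s]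
  have hb : ∀ k : ℕ, |r ^ k * ((M ^ k).mulVec v) s| ≤ r ^ k * c := by
    intro k
    rw [abs_mul, abs_of_nonneg (pow_nonneg hr0 k)]
    exact mul_le_mul_of_nonneg_left ((hM.pow k).abs_mulVec_le hv s) (pow_nonneg hr0 k)
  have hsum : Summable (fun k : ℕ => r ^ k * c) := (summable_geometric_of_lt_one hr0 hr1).mul_right _
  have habs : Summable (fun k : ℕ => |r ^ k * ((M ^ k).mulVec v) s|) :=
    hsum.of_nonneg_of_le (fun k => abs_nonneg _) hb
  have h1 : |∑' k : ℕ, r ^ k * ((M ^ k).mulVec v) s| ≤ ∑' k : ℕ, |r ^ k * ((M ^ k).mulVec v) s| := by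
    exact norm_tsum_le_tsum_norm (f := fun k : ℕ => r ^ k * ((M ^ k).mulVec v) s) habs
  have h2 : ∑' k : ℕ, |r ^ k * ((M ^ k).mulVec v) s| ≤ ∑' k : ℕ, r ^ k * c :=
    Summable.tsum_le_tsum hb habs hsum
  have h3 : ∑' k : ℕ, r ^ k * c = c / (1 - r) := by
    rw [tsum_mul_right, tsum_geometric_of_lt_one hr0 hr1, div_eq_inv_mul]
  linarith

lemma seriesG_nonpos (hM : RowStoch M) (hr0 : 0 ≤ r) (hr1 : r < 1)
    (hv : ∀ x, v x ≤ 0) (s : S) : seriesG M r v s ≤ 0 := by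
  rw [seriesG_apply hM hr0 hr1 v s]
  refine tsum_nonpos fun k => ?_
  refine mul_nonpos_of_nonneg_of_nonpos (pow_nonneg hr0 k) ?_
  have := (hM.pow k).mulVec_mem (v := v) (lo := supN v * -1) (hi := 0)
    (fun x => ⟨by nlinarith [abs_le_supN v x, abs_nonneg (v x), neg_abs_le (v x)], hv x⟩) s
  exact this.2

lemma seriesG_sub (hM : RowStoch M) (hr0 : 0 ≤ r) (hr1 : r < 1) (v w : S → ℝ) (s : S) :
    seriesG M r (v - w) s = seriesG M r v s - seriesG M r w s := by
  rw [seriesG_apply hM hr0 hr1 _ s, seriesG_apply hM hr0 hr1 v s, seriesG_apply hM hr0 hr1 w s,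
    ← Summable.tsum_sub (summable_pt hM hr0 hr1 v s) (summable_pt hM hr0 hr1 w s)]
  congr 1; funext k
  rw [Matrix.mulVec_sub]
  simp [Pi.sub_apply]; ring

lemma seriesG_shift (hM : RowStoch M) (hr0 : 0 ≤ r) (hr1 : r < 1) (v : S → ℝ) :
    seriesG M r v = v + r • M.mulVec (seriesG M r v) := by
  funext s
  have hpt := summable_pt hM hr0 hr1 v
  rw [seriesG_apply hM hr0 hr1 v s, Summable.tsum_eq_zero_add (hpt s)]
  have h0 : r ^ 0 * ((M ^ 0).mulVec v) s = v s := by simp [Matrix.one_mulVec]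
  rw [h0]
  congr 1
  have hMG : M.mulVec (seriesG M r v) s = ∑' k : ℕ, r ^ k * ((M ^ (k + 1)).mulVec v) s := by
    have e1 : M.mulVec (seriesG M r v) s = ∑ x, M s x * seriesG M r v x := rfl
    rw [e1]
    have e2 : ∀ x, M s x * seriesG M r v x = ∑' k : ℕ, M s x * (r ^ k * ((M ^ k).mulVec v) x) := by
      intro x
      rw [seriesG_apply hM hr0 hr1 v x, ← tsum_mul_left]
    simp_rw [e2]
    rw [← Summable.tsum_finsetSum (fun x _ => ((hpt x).mul_left (M s x)))]
    congr 1; funext k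
    have e3 : ∑ x, M s x * (r ^ k * ((M ^ k).mulVec v) x) = r ^ k * ∑ x, M s x * ((M ^ k).mulVec v) x := by
      rw [Finset.mul_sum]; congr 1; funext x; ring
    rw [e3]
    have e4 : ∑ x, M s x * ((M ^ k).mulVec v) x = M.mulVec ((M ^ k).mulVec v) s := rfl
    rw [e4, Matrix.mulVec_mulVec, ← pow_succ']
  rw [Pi.smul_apply, smul_eq_mul, hMG, ← tsum_mul_left]
  congr 1; funext k
  rw [pow_succ]; ring

lemma bellman_unique {M : Matrix S S ℝ} (hM : RowStoch M) {r : ℝ} (hr0 : 0 ≤ r) (hr1 : r < 1)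
    (rw_ : S → ℝ) {X Y : S → ℝ} (hX : X = rw_ + r • M.mulVec X) (hY : Y = rw_ + r • M.mulVec Y) :
    X = Y := by
  set c := supN (fun s => X s - Y s) with hc
  have hdiff : ∀ s, X s - Y s = r * M.mulVec (fun x => X x - Y x) s := by
    intro s
    have e1 : X s = rw_ s + r * M.mulVec X s := by
      nth_rewrite 1 [hX]; simp
    have e2 : Y s = rw_ s + r * M.mulVec Y s := by
      nth_rewrite 1 [hY]; simp
    have e3 : M.mulVec (fun x => X x - Y x) s = M.mulVec X s - M.mulVec Y s := by
      have : (fun x => X x - Y x) = X - Y := rfl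
      rw [this, Matrix.mulVec_sub]; rfl
    rw [e3]; rw [e1, e2]; ring
  have hb : ∀ s, |X s - Y s| ≤ r * c := by
    intro s
    rw [hdiff s, abs_mul, abs_of_nonneg hr0]
    exact mul_le_mul_of_nonneg_left (hM.abs_mulVec_le (fun x => abs_le_supN _ x) s) hr0
  have hcle : c ≤ r * c := by
    rw [hc, supN]
    exact Finset.sup'_le _ _ fun s _ => hb s
  have hc0 : c ≤ 0 := by nlinarith
  funext s
  have := abs_le_supN (fun s => X s - Y s) s
  have : |X s - Y s| ≤ 0 := le_trans this hc0
  have := abs_nonpos_iff.1 (this)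
  linarith [sub_eq_zero.1 this]
lemma discount_shift {M : Matrix S S ℝ} {γ γ' : ℝ} (hM : RowStoch M)
    (hγ0 : 0 ≤ γ) (hγγ' : γ ≤ γ') (hγ'1 : γ' < 1) (rw_ : S → ℝ) :
    seriesG M γ' rw_ =
      seriesG M γ rw_ + (γ' - γ) • seriesG M γ' (M.mulVec (seriesG M γ rw_)) := by
  have hγ'0 : 0 ≤ γ' := le_trans hγ0 hγγ'
  have hγ1 : γ < 1 := lt_of_le_of_lt hγγ' hγ'1
  have hV := seriesG_shift hM hγ0 hγ1 rw_
  have hW := seriesG_shift hM hγ'0 hγ'1 (M.mulVec (seriesG M γ rw_))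
  have hX := seriesG_shift hM hγ'0 hγ'1 rw_
  refine bellman_unique hM hγ'0 hγ'1 rw_ hX ?_
  set V := seriesG M γ rw_ with hVdef
  set W := seriesG M γ' (M.mulVec V) with hWdef
  funext s
  have hVs := congrFun hV s
  have hWs := congrFun hW s
  simp only [Pi.add_apply, Pi.smul_apply, smul_eq_mul] at hVs hWs
  have e : M.mulVec (V + (γ' - γ) • W) s = M.mulVec V s + (γ' - γ) * M.mulVec W s := by
    rw [Matrix.mulVec_add, Matrix.mulVec_smul]; simp
  show V s + (γ' - γ) * W s = rw_ s + γ' * M.mulVec (V + (γ' - γ) • W) s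
  rw [e]
  nlinarith [hVs, hWs]
/-- TV-coupling bound: if per-state total variation between `M'` and `M` is at most `β`,
then `|((M'^t - M^t) V)(s)| ≤ κ (1 - (1-β)^t)` for `V` of span at most `κ`. -/
lemma tv_bound {M M' : Matrix S S ℝ} (hM : RowStoch M) (hM' : RowStoch M')
    {β : ℝ} (hβ1 : β ≤ 1) (hrow : ∀ s, ∑ x, |M' s x - M s x| ≤ 2 * β)
    {V : S → ℝ} {κ : ℝ} (hκ : ∀ s s', V s - V s' ≤ κ) :
    ∀ t s, |(M' ^ t).mulVec V s - (M ^ t).mulVec V s| ≤ κ * (1 - (1 - β) ^ t) := by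
  have hκ0 : 0 ≤ κ := by have := hκ (Classical.arbitrary S) (Classical.arbitrary S); linarith
  have hβ0 : 0 ≤ β := by
    have h1 := hrow (Classical.arbitrary S)
    have h2 : (0:ℝ) ≤ ∑ x, |M' (Classical.arbitrary S) x - M (Classical.arbitrary S) x| :=
      Finset.sum_nonneg fun x _ => abs_nonneg _
    linarith
  -- extremes of V
  obtain ⟨slo, _, hslo⟩ := Finset.exists_mem_eq_inf' (Finset.univ_nonempty (α := S)) V
  obtain ⟨shi, _, hshi⟩ := Finset.exists_mem_eq_sup' (Finset.univ_nonempty (α := S)) V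
  set lo := Finset.univ.inf' Finset.univ_nonempty V with hlo
  set hi := Finset.univ.sup' Finset.univ_nonempty V with hhi
  have hVmem : ∀ x, lo ≤ V x ∧ V x ≤ hi := fun x =>
    ⟨Finset.inf'_le V (Finset.mem_univ x), Finset.le_sup' V (Finset.mem_univ x)⟩
  have hspan : hi - lo ≤ κ := by rw [hshi, hslo]; exact hκ shi slo
  intro t
  induction t with
  | zero => intro s; simp [Matrix.one_mulVec]
  | succ t ih =>
    intro s
    set f' := (M' ^ t).mulVec V with hf'
    set f := (M ^ t).mulVec V with hf
    have hf'mem : ∀ x, lo ≤ f' x ∧ f' x ≤ hi := fun x => (hM'.pow t).mulVec_mem hVmem x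
    have hfmem : ∀ x, lo ≤ f x ∧ f x ≤ hi := fun x => (hM.pow t).mulVec_mem hVmem x
    -- decomposition of the rows
    set m : S → ℝ := fun x => min (M' s x) (M s x) with hm
    set a : S → ℝ := fun x => M' s x - m x with ha
    set b : S → ℝ := fun x => M s x - m x with hb
    have ha0 : ∀ x, 0 ≤ a x := fun x => by simp [ha, hm, min_le_left]
    have hb0 : ∀ x, 0 ≤ b x := fun x => by simp [hb, hm, min_le_right]
    have hm0 : ∀ x, 0 ≤ m x := fun x => le_min (hM'.1 s x) (hM.1 s x)
    have hab : ∀ x, a x + b x = |M' s x - M s x| := by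
      intro x
      rcases le_total (M' s x) (M s x) with h | h
      · simp [ha, hb, hm, min_eq_left h, abs_of_nonpos (by linarith : M' s x - M s x ≤ 0)]
      · simp [ha, hb, hm, min_eq_right h, abs_of_nonneg (by linarith : (0:ℝ) ≤ M' s x - M s x)]
    set βs := ∑ x, a x with hβs
    have hsum_ab : ∑ x, a x = ∑ x, b x := by
      have e1 : ∑ x, a x = 1 - ∑ x, m x := by
        simp only [ha, Finset.sum_sub_distrib, hM'.2 s]
      have e2 : ∑ x, b x = 1 - ∑ x, m x := by
        simp only [hb, Finset.sum_sub_distrib, hM.2 s]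
      rw [e1, e2]
    have hβsle : βs ≤ β := by
      have : βs + βs = ∑ x, (a x + b x) := by
        rw [Finset.sum_add_distrib, hβs, ← hsum_ab]
      have h2 : ∑ x, (a x + b x) ≤ 2 * β := by
        simp_rw [hab]; exact hrow s
      linarith
    have hβs0 : 0 ≤ βs := Finset.sum_nonneg fun x _ => ha0 x
    have hmsum : ∑ x, m x = 1 - βs := by
      have : βs = 1 - ∑ x, m x := by
        simp only [hβs, ha, Finset.sum_sub_distrib, hM'.2 s]
      linarith
    -- expand the (t+1)-step values
    have hL : (M' ^ (t+1)).mulVec V s = ∑ x, M' s x * f' x := by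
      rw [pow_succ', ← Matrix.mulVec_mulVec]; rfl
    have hR : (M ^ (t+1)).mulVec V s = ∑ x, M s x * f x := by
      rw [pow_succ', ← Matrix.mulVec_mulVec]; rfl
    have hsplit : ∑ x, M' s x * f' x - ∑ x, M s x * f x =
        (∑ x, m x * (f' x - f x)) + ((∑ x, a x * f' x) - (∑ x, b x * f x)) := by
      have e1 : ∀ x, M' s x * f' x = m x * f' x + a x * f' x := by
        intro x; simp [ha]; ring
      have e2 : ∀ x, M s x * f x = m x * f x + b x * f x := by
        intro x; simp [hb]; ring
      simp_rw [e1, e2, Finset.sum_add_distrib, mul_sub, Finset.sum_sub_distrib]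
      ring
    have hterm1 : |∑ x, m x * (f' x - f x)| ≤ (1 - βs) * (κ * (1 - (1 - β) ^ t)) := by
      calc |∑ x, m x * (f' x - f x)| ≤ ∑ x, |m x * (f' x - f x)| :=
            Finset.abs_sum_le_sum_abs _ _
        _ ≤ ∑ x, m x * (κ * (1 - (1 - β) ^ t)) := by
            refine Finset.sum_le_sum fun x _ => ?_
            rw [abs_mul, abs_of_nonneg (hm0 x)]
            exact mul_le_mul_of_nonneg_left (ih x) (hm0 x)
        _ = (1 - βs) * (κ * (1 - (1 - β) ^ t)) := by
            rw [← Finset.sum_mul, hmsum]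
    have hsb : ∑ x, b x = βs := hsum_ab.symm
    have hterm2 : |(∑ x, a x * f' x) - (∑ x, b x * f x)| ≤ βs * κ := by
      have hup1 : ∑ x, a x * f' x ≤ βs * hi := by
        calc ∑ x, a x * f' x ≤ ∑ x, a x * hi :=
              Finset.sum_le_sum fun x _ => mul_le_mul_of_nonneg_left (hf'mem x).2 (ha0 x)
          _ = βs * hi := by rw [← Finset.sum_mul]
      have hlo1 : βs * lo ≤ ∑ x, a x * f' x := by
        calc βs * lo = ∑ x, a x * lo := by rw [← Finset.sum_mul]
          _ ≤ ∑ x, a x * f' x :=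
              Finset.sum_le_sum fun x _ => mul_le_mul_of_nonneg_left (hf'mem x).1 (ha0 x)
      have hup2 : ∑ x, b x * f x ≤ βs * hi := by
        calc ∑ x, b x * f x ≤ ∑ x, b x * hi :=
              Finset.sum_le_sum fun x _ => mul_le_mul_of_nonneg_left (hfmem x).2 (hb0 x)
          _ = βs * hi := by rw [← Finset.sum_mul, hsb]
      have hlo2 : βs * lo ≤ ∑ x, b x * f x := by
        calc βs * lo = ∑ x, b x * lo := by rw [← Finset.sum_mul, hsb]
          _ ≤ ∑ x, b x * f x :=
              Finset.sum_le_sum fun x _ => mul_le_mul_of_nonneg_left (hfmem x).1 (hb0 x)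
      rw [abs_le]
      constructor <;> nlinarith [mul_le_mul_of_nonneg_left hspan hβs0]
    have hq0 : (0:ℝ) ≤ (1 - β) ^ t := pow_nonneg (by linarith) t
    have hfinal : (1 - βs) * (κ * (1 - (1 - β) ^ t)) + βs * κ ≤ κ * (1 - (1 - β) ^ (t + 1)) := by
      rw [pow_succ]
      nlinarith [mul_nonneg (mul_nonneg hκ0 hq0) (sub_nonneg.2 hβsle)]
    rw [hL, hR]
    calc |(∑ x, M' s x * f' x) - ∑ x, M s x * f x|
        = |(∑ x, m x * (f' x - f x)) + ((∑ x, a x * f' x) - (∑ x, b x * f x))| := by rw [hsplit]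
      _ ≤ |∑ x, m x * (f' x - f x)| + |(∑ x, a x * f' x) - (∑ x, b x * f x)| := abs_add_le _ _
      _ ≤ (1 - βs) * (κ * (1 - (1 - β) ^ t)) + βs * κ := add_le_add hterm1 hterm2
      _ ≤ κ * (1 - (1 - β) ^ (t + 1)) := hfinal
lemma seriesG_tv_diff {M M' : Matrix S S ℝ} (hM : RowStoch M) (hM' : RowStoch M')
    {r : ℝ} (hr0 : 0 ≤ r) (hr1 : r < 1) {β : ℝ} (hβ0 : 0 ≤ β) (hβ1 : β ≤ 1)
    (hrow : ∀ s, ∑ x, |M' s x - M s x| ≤ 2 * β)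
    {V : S → ℝ} {κ : ℝ} (hκ : ∀ s s', V s - V s' ≤ κ) (s : S) :
    |seriesG M' r (M'.mulVec V) s - seriesG M r (M.mulVec V) s| ≤
      κ / (1 - r) * (β / (1 - r * (1 - β))) := by
  have hκ0 : 0 ≤ κ := by have := hκ (Classical.arbitrary S) (Classical.arbitrary S); linarith
  have hshift : ∀ (N : Matrix S S ℝ) (k : ℕ), (N ^ k).mulVec (N.mulVec V) = (N ^ (k+1)).mulVec V := by
    intro N k; rw [Matrix.mulVec_mulVec, ← pow_succ]
  have hr'0 : 0 ≤ r * (1 - β) := mul_nonneg hr0 (by linarith)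
  have hr'1 : r * (1 - β) < 1 := lt_of_le_of_lt (by nlinarith) hr1
  have hd1 : (0:ℝ) < 1 - r := by linarith
  have hd2 : (0:ℝ) < 1 - r * (1 - β) := by linarith
  have hdiff : seriesG M' r (M'.mulVec V) s - seriesG M r (M.mulVec V) s =
      ∑' k : ℕ, (r ^ k * ((M' ^ (k+1)).mulVec V s) - r ^ k * ((M ^ (k+1)).mulVec V s)) := by
    rw [seriesG_apply hM' hr0 hr1 _ s, seriesG_apply hM hr0 hr1 _ s]
    rw [← Summable.tsum_sub (summable_pt hM' hr0 hr1 _ s) (summable_pt hM hr0 hr1 _ s)]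
    congr 1; funext k; rw [hshift M' k, hshift M k]
  set g : ℕ → ℝ := fun k => κ * (r ^ k - (1 - β) * (r * (1 - β)) ^ k) with hg
  have hgsum : Summable g := by
    apply Summable.mul_left
    exact ((summable_geometric_of_lt_one hr0 hr1).sub
      ((summable_geometric_of_lt_one hr'0 hr'1).mul_left (1 - β)))
  have hbound : ∀ k : ℕ, |r ^ k * ((M' ^ (k+1)).mulVec V s) - r ^ k * ((M ^ (k+1)).mulVec V s)| ≤ g k := by
    intro k
    have h1 := tv_bound hM hM' hβ1 hrow hκ (k+1) s
    have e : |r ^ k * ((M' ^ (k+1)).mulVec V s) - r ^ k * ((M ^ (k+1)).mulVec V s)|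
        = r ^ k * |(M' ^ (k+1)).mulVec V s - (M ^ (k+1)).mulVec V s| := by
      rw [← mul_sub, abs_mul, abs_of_nonneg (pow_nonneg hr0 k)]
    rw [e]
    show _ ≤ κ * (r ^ k - (1 - β) * (r * (1 - β)) ^ k)
    have e2 : κ * (r ^ k - (1 - β) * (r * (1 - β)) ^ k) = r ^ k * (κ * (1 - (1-β) ^ (k+1))) := by
      rw [mul_pow, pow_succ]; ring
    rw [e2]
    exact mul_le_mul_of_nonneg_left h1 (pow_nonneg hr0 k)
  have habs : Summable (fun k : ℕ => |r ^ k * ((M' ^ (k+1)).mulVec V s) - r ^ k * ((M ^ (k+1)).mulVec V s)|) :=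
    hgsum.of_nonneg_of_le (fun k => abs_nonneg _) hbound
  have h2 : |seriesG M' r (M'.mulVec V) s - seriesG M r (M.mulVec V) s| ≤ ∑' k, g k := by
    rw [hdiff]
    exact le_trans (norm_tsum_le_tsum_norm
      (f := fun k : ℕ => r ^ k * ((M' ^ (k+1)).mulVec V s) - r ^ k * ((M ^ (k+1)).mulVec V s)) habs)
      (Summable.tsum_le_tsum hbound habs hgsum)
  have h3 : ∑' k, g k = κ * (1 / (1 - r) - (1 - β) / (1 - r * (1 - β))) := by
    rw [hg]
    rw [tsum_mul_left]
    congr 1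
    rw [Summable.tsum_sub (summable_geometric_of_lt_one hr0 hr1)
      ((summable_geometric_of_lt_one hr'0 hr'1).mul_left (1 - β))]
    rw [tsum_geometric_of_lt_one hr0 hr1, tsum_mul_left,
      tsum_geometric_of_lt_one hr'0 hr'1]
    rw [one_div, div_eq_mul_inv]
  have h4 : κ * (1 / (1 - r) - (1 - β) / (1 - r * (1 - β))) = κ / (1 - r) * (β / (1 - r * (1 - β))) := by
    rw [div_mul_div_comm]
    rw [show 1 / (1 - r) - (1 - β) / (1 - r * (1 - β)) = β / ((1 - r) * (1 - r * (1 - β))) by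
      field_simp; ring]
    rw [mul_div_assoc]
  linarith [h2, h3.le, h3.ge]

lemma mulVec_nonpos {M : Matrix S S ℝ} (h0 : ∀ s x, 0 ≤ M s x) {u : S → ℝ}
    (hu : ∀ y, u y ≤ 0) (x : S) : M.mulVec u x ≤ 0 :=
  Finset.sum_nonpos fun y _ => mul_nonpos_of_nonneg_of_nonpos (h0 x y) (hu y)

end planningHelpers

/-- **Planning loss bound.**
`M = (P,R)` and `M̂ = (P̂,R̂)` share state and action spaces. With `π⋆Bw` optimal for `M` at
discount `γBw`, `π⋆γ` optimal for `M` at discount `γ`, `π̂` optimal for `M̂` at discount `γ`,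
`ε̂ = ‖V_{M,γ}^{π⋆γ} − V_{M,γ}^{π̂}‖_∞`, `δ = δ_M(π⋆γ, π⋆Bw)`, `δ̂ = δ_M(π⋆γ, π̂)`, and
`κ` the value-function variation of `M` at discount `γ`, the planning loss satisfies
`‖V_{M,γBw}^{π⋆Bw} − V_{M,γBw}^{π̂}‖_∞ ≤ κ ((γBw−γ)/(1−γBw))
  ((δ/2)/(1−γBw(1−δ/2)) + (δ̂/2)/(1−γBw(1−δ̂/2))) + ε̂ (1−γ)/(1−γBw)`. -/
theorem planning_loss_bound
    {S A : Type*} [Fintype S] [DecidableEq S] [Nonempty S] [Fintype A] [Nonempty A] [DecidableEq A]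
    (P Phat : S → A → S → ℝ) (R Rhat : S → A → ℝ) (Rmax Rmaxhat : ℝ)
    (hP0 : ∀ s a s', 0 ≤ P s a s') (hP1 : ∀ s a, ∑ s', P s a s' = 1)
    (hPhat0 : ∀ s a s', 0 ≤ Phat s a s') (hPhat1 : ∀ s a, ∑ s', Phat s a s' = 1)
    (hRmax : 0 ≤ Rmax) (hR0 : ∀ s a, 0 ≤ R s a) (hR1 : ∀ s a, R s a ≤ Rmax)
    (hRmaxhat : 0 ≤ Rmaxhat) (hRhat0 : ∀ s a, 0 ≤ Rhat s a) (hRhat1 : ∀ s a, Rhat s a ≤ Rmaxhat)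
    (γ γBw : ℝ) (hγ0 : 0 ≤ γ) (hγγBw : γ ≤ γBw) (hγBw1 : γBw < 1)
    (πBw πγ πhat : S → A)
    (hπBw : IsOptimalPolicy P R γBw πBw) (hπγ : IsOptimalPolicy P R γ πγ)
    (hπhat : IsOptimalPolicy Phat Rhat γ πhat) :
    supNorm (fun s => valueVec P R γBw πBw s - valueVec P R γBw πhat s) ≤
      valueVariation (valueVec P R γ πγ) * ((γBw - γ) / (1 - γBw)) *
        ((discordantVar P πγ πBw / 2) / (1 - γBw * (1 - discordantVar P πγ πBw / 2))
          + (discordantVar P πγ πhat / 2) / (1 - γBw * (1 - discordantVar P πγ πhat / 2)))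
      + supNorm (fun s => valueVec P R γ πγ s - valueVec P R γ πhat s) * (1 - γ) / (1 - γBw) := by
  classical
  have hγBw0 : (0:ℝ) ≤ γBw := le_trans hγ0 hγγBw
  have hγ1 : γ < 1 := lt_of_le_of_lt hγγBw hγBw1
  have hden : (0:ℝ) < 1 - γBw := by linarith
  -- matrices and rewards
  have hMb : RowStoch (polMatrix P πBw) := ⟨fun s x => hP0 s (πBw s) x, fun s => hP1 s (πBw s)⟩
  have hMg : RowStoch (polMatrix P πγ) := ⟨fun s x => hP0 s (πγ s) x, fun s => hP1 s (πγ s)⟩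
  have hMh : RowStoch (polMatrix P πhat) := ⟨fun s x => hP0 s (πhat s) x, fun s => hP1 s (πhat s)⟩
  set Mb := polMatrix P πBw with hMbdef
  set Mg := polMatrix P πγ with hMgdef
  set Mh := polMatrix P πhat with hMhdef
  set Vg := valueVec P R γ πγ with hVgdef
  set VgB := valueVec P R γ πBw with hVgBdef
  set Vgh := valueVec P R γ πhat with hVghdef
  set κ := valueVariation Vg with hκdef
  set ε := supNorm (fun s => Vg s - Vgh s) with hεdef
  set d1 := discordantVar P πγ πBw with hd1def
  set d2 := discordantVar P πγ πhat with hd2def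
  -- value identities
  have eB : valueVec P R γBw πBw = seriesG Mb γBw (polReward R πBw) := rfl
  have eH : valueVec P R γBw πhat = seriesG Mh γBw (polReward R πhat) := rfl
  have eBγ : VgB = seriesG Mb γ (polReward R πBw) := rfl
  have eHγ : Vgh = seriesG Mh γ (polReward R πhat) := rfl
  -- span / sup-norm facts
  have hκspan : ∀ s s', Vg s - Vg s' ≤ κ := by
    intro s s'
    refine le_trans (le_abs_self _) ?_
    exact Finset.le_sup' (fun pr : S × S => |Vg pr.1 - Vg pr.2|) (Finset.mem_univ (s, s'))
  have hεb : ∀ x, |Vgh x - Vg x| ≤ ε := by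
    intro x
    rw [abs_sub_comm]
    exact Finset.le_sup' (fun s => |Vg s - Vgh s|) (Finset.mem_univ x)
  have hεb' : ∀ x, |Vg x - Vgh x| ≤ ε := fun x =>
    Finset.le_sup' (fun s => |Vg s - Vgh s|) (Finset.mem_univ x)
  -- discordant variation facts
  have hd_nonneg : ∀ (π π' : S → A), (0:ℝ) ≤ discordantVar P π π' := by
    intro π π'
    exact (Finset.le_fold_max (0:ℝ)).2 (Or.inl le_rfl)
  have hd_le_two : ∀ (π π' : S → A), discordantVar P π π' ≤ 2 := by
    intro π π'
    refine (Finset.fold_max_le (2:ℝ)).2 ⟨by norm_num, fun s _ => ?_⟩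
    calc ∑ x, |P s (π s) x - P s (π' s) x| ≤ ∑ x, (P s (π s) x + P s (π' s) x) := by
          refine Finset.sum_le_sum fun x _ => ?_
          refine (abs_sub _ _).trans ?_
          rw [abs_of_nonneg (hP0 s (π s) x), abs_of_nonneg (hP0 s (π' s) x)]
      _ = 2 := by rw [Finset.sum_add_distrib, hP1 s (π s), hP1 s (π' s)]; norm_num
  have hrowgen : ∀ (π' : S → A), ∀ s,
      ∑ x, |polMatrix P π' s x - Mg s x| ≤ 2 * (discordantVar P πγ π' / 2) := by
    intro π' s
    rw [mul_div_cancel₀ _ (two_ne_zero)]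
    by_cases hs : πγ s = π' s
    · have : ∀ x, |polMatrix P π' s x - Mg s x| = 0 := by
        intro x
        rw [hMgdef]
        simp [polMatrix, hs]
      rw [Finset.sum_congr rfl fun x _ => this x]
      simp [hd_nonneg]
    · have hmem : s ∈ Finset.univ.filter fun s => πγ s ≠ π' s := by
        simp [hs]
      refine le_trans ?_ ((Finset.le_fold_max _).2 (Or.inr ⟨s, hmem,
        le_refl (∑ x, |P s (πγ s) x - P s (π' s) x|)⟩))
      rw [hMgdef]
      refine le_of_eq (Finset.sum_congr rfl fun x _ => ?_)
      rw [abs_sub_comm]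
      rfl
  have hβ1_0 : (0:ℝ) ≤ d1 / 2 := by have := hd_nonneg πγ πBw; rw [hd1def]; linarith
  have hβ1_1 : d1 / 2 ≤ 1 := by have := hd_le_two πγ πBw; rw [hd1def]; linarith
  have hβ2_0 : (0:ℝ) ≤ d2 / 2 := by have := hd_nonneg πγ πhat; rw [hd2def]; linarith
  have hβ2_1 : d2 / 2 ≤ 1 := by have := hd_le_two πγ πhat; rw [hd2def]; linarith
  -- discount shift identities
  have hshiftB := discount_shift hMb hγ0 hγγBw hγBw1 (polReward R πBw)
  have hshiftH := discount_shift hMh hγ0 hγγBw hγBw1 (polReward R πhat)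
  -- key TV bounds
  have hA1 := seriesG_tv_diff hMg hMb hγBw0 hγBw1 hβ1_0 hβ1_1 (hrowgen πBw) hκspan
  have hA2 := seriesG_tv_diff hMg hMh hγBw0 hγBw1 hβ2_0 hβ2_1 (hrowgen πhat) hκspan
  set B1 : ℝ := (d1 / 2) / (1 - γBw * (1 - d1 / 2)) with hB1def
  set B2 : ℝ := (d2 / 2) / (1 - γBw * (1 - d2 / 2)) with hB2def
  -- the main pointwise estimate
  unfold supNorm
  refine Finset.sup'_le _ _ fun s _ => ?_
  have hL0 : 0 ≤ valueVec P R γBw πBw s - valueVec P R γBw πhat s :=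
    sub_nonneg.2 (hπBw πhat s)
  rw [abs_of_nonneg hL0]
  -- expand using the discount-shift identity
  have hBs : valueVec P R γBw πBw s
      = VgB s + (γBw - γ) * seriesG Mb γBw (Mb.mulVec VgB) s := by
    rw [eB]
    rw [congrFun hshiftB s]
    rw [← eBγ]
    simp
  have hHs : valueVec P R γBw πhat s
      = Vgh s + (γBw - γ) * seriesG Mh γBw (Mh.mulVec Vgh) s := by
    rw [eH]
    rw [congrFun hshiftH s]
    rw [← eHγ]
    simp
  -- decompositions of the G-terms
  have hdecB : seriesG Mb γBw (Mb.mulVec VgB) s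
      = seriesG Mb γBw (Mb.mulVec Vg) s + seriesG Mb γBw (Mb.mulVec (VgB - Vg)) s := by
    have e1 : Mb.mulVec (VgB - Vg) = Mb.mulVec VgB - Mb.mulVec Vg := Matrix.mulVec_sub Mb _ _
    have := seriesG_sub hMb hγBw0 hγBw1 (Mb.mulVec VgB) (Mb.mulVec Vg) s
    rw [← e1] at this
    have e2 : Mb.mulVec VgB - Mb.mulVec Vg = Mb.mulVec VgB - Mb.mulVec Vg := rfl
    linarith [this]
  have hdecH : seriesG Mh γBw (Mh.mulVec Vgh) s
      = seriesG Mh γBw (Mh.mulVec Vg) s + seriesG Mh γBw (Mh.mulVec (Vgh - Vg)) s := by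
    have e1 : Mh.mulVec (Vgh - Vg) = Mh.mulVec Vgh - Mh.mulVec Vg := Matrix.mulVec_sub Mh _ _
    have := seriesG_sub hMh hγBw0 hγBw1 (Mh.mulVec Vgh) (Mh.mulVec Vg) s
    rw [← e1] at this
    linarith [this]
  -- bound the four pieces
  have hnegB : seriesG Mb γBw (Mb.mulVec (VgB - Vg)) s ≤ 0 := by
    refine seriesG_nonpos hMb hγBw0 hγBw1 (fun x => ?_) s
    refine mulVec_nonpos hMb.1 (fun y => ?_) x
    have : VgB y ≤ Vg y := hπγ πBw y
    simp [Pi.sub_apply]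
    linarith
  have hCh : |seriesG Mh γBw (Mh.mulVec (Vgh - Vg)) s| ≤ ε / (1 - γBw) := by
    refine seriesG_abs_le hMh hγBw0 hγBw1 (fun x => ?_) s
    exact hMh.abs_mulVec_le (fun y => by simpa [Pi.sub_apply] using hεb y) x
  have hA1s : |seriesG Mb γBw (Mb.mulVec Vg) s - seriesG Mg γBw (Mg.mulVec Vg) s|
      ≤ κ / (1 - γBw) * B1 := by
    exact hA1 s
  have hA2s : |seriesG Mh γBw (Mh.mulVec Vg) s - seriesG Mg γBw (Mg.mulVec Vg) s|
      ≤ κ / (1 - γBw) * B2 := by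
    exact hA2 s
  -- value difference at discount γ
  have hval : VgB s - Vgh s ≤ ε := by
    have h1 : VgB s ≤ Vg s := hπγ πBw s
    have h2 : Vg s - Vgh s ≤ ε := le_trans (le_abs_self _) (hεb' s)
    linarith
  -- assemble
  have hmain : valueVec P R γBw πBw s - valueVec P R γBw πhat s
      ≤ ε + (γBw - γ) * (κ / (1 - γBw) * B1 + κ / (1 - γBw) * B2 + ε / (1 - γBw)) := by
    rw [hBs, hHs, hdecB, hdecH]
    have hγd : 0 ≤ γBw - γ := by linarith
    have habs1 := abs_le.1 hA1s
    have habs2 := abs_le.1 hA2s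
    have habs3 := abs_le.1 hCh
    nlinarith [mul_le_mul_of_nonneg_left (add_le_add (add_le_add
      (by linarith [habs1.2] : seriesG Mb γBw (Mb.mulVec Vg) s - seriesG Mg γBw (Mg.mulVec Vg) s ≤ κ / (1 - γBw) * B1)
      (by linarith [habs2.1] : seriesG Mg γBw (Mg.mulVec Vg) s - seriesG Mh γBw (Mh.mulVec Vg) s ≤ κ / (1 - γBw) * B2))
      (by linarith [habs3.1] : - seriesG Mh γBw (Mh.mulVec (Vgh - Vg)) s ≤ ε / (1 - γBw))) hγd,
      mul_nonpos_of_nonneg_of_nonpos hγd hnegB]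
  have heq : ε + (γBw - γ) * (κ / (1 - γBw) * B1 + κ / (1 - γBw) * B2 + ε / (1 - γBw))
      = κ * ((γBw - γ) / (1 - γBw)) * (B1 + B2) + ε * (1 - γ) / (1 - γBw) := by
    field_simp
    ring
  linarith [hmain, heq.le, heq.ge]
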